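/- For s, t > 0 and ξ ∈ ℝ, the improper integral over y ∈ ℝ of (2πis)^{−1/2}(2πit)^{−1/2} · e^{(i/2)y²/s} · e^{(i/2)(ξ−y)²/t} exists and equals (2πi(s+t))^{−1/2} · e^{(i/2)ξ²/(s+t)}. -/

import Mathlib

open MeasureTheory Filter Real

/-- The free Feynman kernel `K s x = (2πis)^{-1/2} e^{(i/2)x²/s}` (principal branch). -/
noncomputable def freeKernel (s x : ℝ) : ℂ :=
  (2 * (Real.pi : ℂ) * Complex.I * (s : ℂ)) ^ (-(1 / 2 : ℂ)) *
    Complex.exp (Complex.I / 2 * (x : ℂ) ^ 2 / (s : ℂ))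

open Set Complex intervalIntegral

noncomputable def fresnelAux (c : ℂ) : ℂ :=
  (∫ y in (0:ℝ)..1, Complex.exp (c * (y:ℂ)^2)) - Complex.exp c / (2*c)
    + ∫ y in Set.Ioi (1:ℝ), Complex.exp (c * (y:ℂ)^2) / (2*c*(y:ℂ)^2)

lemma fre_hasDerivAt (c : ℂ) (hc : c ≠ 0) {y : ℝ} (hy : y ≠ 0) :
    HasDerivAt (fun x : ℝ => Complex.exp (c*(x:ℂ)^2) / (2*c*(x:ℂ)))
      (Complex.exp (c*(y:ℂ)^2) - Complex.exp (c*(y:ℂ)^2)/(2*c*(y:ℂ)^2)) y := by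
  have hyC : (y:ℂ) ≠ 0 := Complex.ofReal_ne_zero.mpr hy
  have h1 : HasDerivAt (fun z : ℂ => Complex.exp (c*z^2) / (2*c*z))
      ((Complex.exp (c*(y:ℂ)^2) * (c * (2*(y:ℂ))) * (2*c*(y:ℂ))
        - Complex.exp (c*(y:ℂ)^2) * (2*c)) / (2*c*(y:ℂ))^2) (y:ℂ) := by
    have hnum : HasDerivAt (fun z : ℂ => Complex.exp (c*z^2))
        (Complex.exp (c*(y:ℂ)^2) * (c * (2*(y:ℂ)))) (y:ℂ) := by
      have := ((hasDerivAt_pow 2 (y:ℂ)).const_mul c).cexp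
      simpa [mul_comm, mul_assoc, mul_left_comm] using this
    have hden : HasDerivAt (fun z : ℂ => 2*c*z) (2*c) (y:ℂ) := by
      simpa using (hasDerivAt_id (y:ℂ)).const_mul (2*c)
    exact hnum.div hden (by simp [hc, hyC])
  have := h1.comp_ofReal
  convert this using 1
  field_simp

lemma fre_cont_exp (c : ℂ) : Continuous fun y : ℝ => Complex.exp (c*(y:ℂ)^2) :=
  Complex.continuous_exp.comp (continuous_const.mul (Complex.continuous_ofReal.pow 2))

lemma fre_IBP (c : ℂ) (hc : c ≠ 0) {R : ℝ} (hR : 1 ≤ R) :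
    ∫ y in (1:ℝ)..R, Complex.exp (c*(y:ℂ)^2)
      = Complex.exp (c*(R:ℂ)^2)/(2*c*(R:ℂ)) - Complex.exp c/(2*c)
        + ∫ y in (1:ℝ)..R, Complex.exp (c*(y:ℂ)^2)/(2*c*(y:ℂ)^2) := by
  have hcont_tail : ContinuousOn (fun y : ℝ => Complex.exp (c*(y:ℂ)^2)/(2*c*(y:ℂ)^2)) (Set.uIcc 1 R) := by
    apply ContinuousOn.div (fre_cont_exp c).continuousOn
      (by fun_prop)
    intro y hy
    rw [Set.uIcc_of_le hR] at hy
    have hy0 : (y:ℝ) ≠ 0 := by linarith [hy.1]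
    simp [hc, Complex.ofReal_ne_zero.mpr hy0]
  have hderiv : ∀ y ∈ Set.uIcc (1:ℝ) R,
      HasDerivAt (fun x : ℝ => Complex.exp (c*(x:ℂ)^2) / (2*c*(x:ℂ)))
        (Complex.exp (c*(y:ℂ)^2) - Complex.exp (c*(y:ℂ)^2)/(2*c*(y:ℂ)^2)) y := by
    intro y hy
    rw [Set.uIcc_of_le hR] at hy
    exact fre_hasDerivAt c hc (by linarith [hy.1])
  have hint : IntervalIntegrable
      (fun y : ℝ => Complex.exp (c*(y:ℂ)^2) - Complex.exp (c*(y:ℂ)^2)/(2*c*(y:ℂ)^2)) volume 1 R :=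
    (((fre_cont_exp c).continuousOn).sub hcont_tail).intervalIntegrable
  have hFTC := intervalIntegral.integral_eq_sub_of_hasDerivAt hderiv hint
  have hsub := intervalIntegral.integral_sub ((fre_cont_exp c).intervalIntegrable 1 R)
    (hcont_tail.intervalIntegrable (μ := volume))
  rw [hsub] at hFTC
  have h1 : Complex.exp (c*((1:ℝ):ℂ)^2) / (2*c*((1:ℝ):ℂ)) = Complex.exp c / (2*c) := by norm_num
  rw [h1] at hFTC
  linear_combination hFTC

lemma fre_tail_integrable (c : ℂ) (hc : c ≠ 0) {a : ℝ} (ha : 0 < a) (hac : a ≤ ‖c‖)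
    (hre : c.re ≤ 0) :
    IntegrableOn (fun y : ℝ => Complex.exp (c*(y:ℂ)^2)/(2*c*(y:ℂ)^2)) (Set.Ioi (1:ℝ)) := by
  have hg : IntegrableOn (fun y : ℝ => (2*a)⁻¹ * y^(-2:ℝ)) (Set.Ioi (1:ℝ)) :=
    (integrableOn_Ioi_rpow_of_lt (by norm_num) one_pos).const_mul _
  apply Integrable.mono' hg
  · apply ContinuousOn.aestronglyMeasurable _ measurableSet_Ioi
    apply ContinuousOn.div (fre_cont_exp c).continuousOn (by fun_prop)
    intro y hy
    have hy0 : (y:ℝ) ≠ 0 := by simp only [Set.mem_Ioi] at hy; linarith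
    simp [hc, Complex.ofReal_ne_zero.mpr hy0]
  · filter_upwards [ae_restrict_mem measurableSet_Ioi] with y hy
    simp only [Set.mem_Ioi] at hy
    have hy0 : (0:ℝ) < y := by linarith
    rw [norm_div]
    have hnum : ‖Complex.exp (c*(y:ℂ)^2)‖ ≤ 1 := by
      rw [Complex.norm_exp]
      apply Real.exp_le_one_iff.mpr
      have : (c*(y:ℂ)^2).re = c.re * y^2 := by
        simp [Complex.mul_re, ← Complex.ofReal_pow]
      rw [this]
      exact mul_nonpos_of_nonpos_of_nonneg hre (sq_nonneg y)
    have hden : ‖(2*c*(y:ℂ)^2 : ℂ)‖ = 2 * ‖c‖ * y^2 := by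
      rw [norm_mul, norm_mul, norm_pow, Complex.norm_two, Complex.norm_real, Real.norm_eq_abs,
        _root_.sq_abs]
    rw [hden]
    have hpos : (0:ℝ) < 2 * ‖c‖ * y^2 :=
      mul_pos (mul_pos two_pos (norm_pos_iff.mpr hc)) (pow_pos hy0 2)
    rw [div_le_iff₀ hpos]
    have h2 : (2*a)⁻¹ * y^(-2:ℝ) * (2 * ‖c‖ * y^2) = ‖c‖ / a := by
      rw [Real.rpow_neg hy0.le, Real.rpow_two]
      field_simp
    rw [h2]
    calc ‖Complex.exp (c*(y:ℂ)^2)‖ ≤ 1 := hnum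
      _ ≤ ‖c‖ / a := (one_le_div ha).mpr hac

lemma fre_tendsto_truncated (c : ℂ) (hc : c ≠ 0) (hre : c.re ≤ 0) :
    Tendsto (fun R : ℝ => ∫ y in (0:ℝ)..R, Complex.exp (c*(y:ℂ)^2)) atTop (nhds (fresnelAux c)) := by
  have habs : (0:ℝ) < ‖c‖ := by simpa using hc
  have hint := fre_tail_integrable c hc habs le_rfl hre
  have h0 : Tendsto (fun R : ℝ => Complex.exp (c*(R:ℂ)^2)/(2*c*(R:ℂ))) atTop (nhds 0) := by
    have hgt : Tendsto (fun R : ℝ => (2*‖c‖)⁻¹ * R⁻¹) atTop (nhds (0:ℝ)) := by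
      simpa using (tendsto_inv_atTop_zero (𝕜 := ℝ)).const_mul (2*‖c‖)⁻¹
    apply squeeze_zero_norm' _ hgt
    filter_upwards [eventually_gt_atTop (0:ℝ)] with R hR
    rw [norm_div]
    have hnum : ‖Complex.exp (c*(R:ℂ)^2)‖ ≤ 1 := by
      rw [Complex.norm_exp]
      apply Real.exp_le_one_iff.mpr
      have : (c*(R:ℂ)^2).re = c.re * R^2 := by
        simp [Complex.mul_re, ← Complex.ofReal_pow]
      rw [this]
      exact mul_nonpos_of_nonpos_of_nonneg hre (sq_nonneg R)
    have hden : ‖(2*c*(R:ℂ) : ℂ)‖ = 2 * ‖c‖ * R := by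
      rw [norm_mul, norm_mul, Complex.norm_two, Complex.norm_real, Real.norm_eq_abs,
        abs_of_pos hR]
    rw [hden]
    have hpos : (0:ℝ) < 2 * ‖c‖ * R :=
      mul_pos (mul_pos two_pos (norm_pos_iff.mpr hc)) hR
    rw [div_le_iff₀ hpos]
    calc ‖Complex.exp (c*(R:ℂ)^2)‖ ≤ 1 := hnum
      _ = (2*‖c‖)⁻¹ * R⁻¹ * (2 * ‖c‖ * R) := by field_simp
  have h1 : Tendsto (fun R : ℝ => ∫ y in (1:ℝ)..R, Complex.exp (c*(y:ℂ)^2)/(2*c*(y:ℂ)^2)) atTop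
      (nhds (∫ y in Set.Ioi (1:ℝ), Complex.exp (c*(y:ℂ)^2)/(2*c*(y:ℂ)^2))) :=
    intervalIntegral_tendsto_integral_Ioi 1 hint tendsto_id
  have hcombined : Tendsto (fun R : ℝ =>
      (∫ y in (0:ℝ)..1, Complex.exp (c*(y:ℂ)^2)) +
        (Complex.exp (c*(R:ℂ)^2)/(2*c*(R:ℂ)) - Complex.exp c/(2*c)
          + ∫ y in (1:ℝ)..R, Complex.exp (c*(y:ℂ)^2)/(2*c*(y:ℂ)^2))) atTop (nhds (fresnelAux c)) := by
    have := tendsto_const_nhds (x := ∫ y in (0:ℝ)..1, Complex.exp (c*(y:ℂ)^2)) (f := atTop (α := ℝ))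
    have h2 := this.add ((h0.sub_const (Complex.exp c/(2*c))).add h1)
    simp only [zero_sub] at h2
    convert h2 using 2
    unfold fresnelAux
    ring
  apply hcombined.congr'
  filter_upwards [eventually_ge_atTop (1:ℝ)] with R hR
  rw [← fre_IBP c hc hR]
  exact intervalIntegral.integral_add_adjacent_intervals
    ((fre_cont_exp c).intervalIntegrable 0 1) ((fre_cont_exp c).intervalIntegrable 1 R)

lemma fre_neg_eps_ne (a ε : ℝ) (ha : 0 < a) : (-(ε:ℂ) + (a:ℂ)*Complex.I) ≠ 0 := by
  intro h
  have him := congrArg Complex.im h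
  simp at him
  exact (ne_of_gt ha) him

lemma fre_abs_ge (a ε : ℝ) (ha : 0 < a) : a ≤ ‖(-(ε:ℂ) + (a:ℂ)*Complex.I)‖ := by
  have : (-(ε:ℂ) + (a:ℂ)*Complex.I).im = a := by simp
  calc a = |(-(ε:ℂ) + (a:ℂ)*Complex.I).im| := by rw [this]; exact (abs_of_pos ha).symm
    _ ≤ ‖(-(ε:ℂ) + (a:ℂ)*Complex.I)‖ := Complex.abs_im_le_norm _

lemma fre_fresnelAux_value (a : ℝ) (ha : 0 < a) :
    fresnelAux ((a:ℂ)*Complex.I) = ((π:ℂ) / (-(a:ℂ)*Complex.I)) ^ ((1:ℂ)/2) / 2 := by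
  set l : Filter ℝ := nhdsWithin 0 (Set.Ioi 0) with hl
  -- the function ε ↦ c ε
  have hcont_c : Tendsto (fun ε : ℝ => -(ε:ℂ) + (a:ℂ)*Complex.I) l (nhds ((a:ℂ)*Complex.I)) := by
    have : Continuous (fun ε : ℝ => -(ε:ℂ) + (a:ℂ)*Complex.I) := by fun_prop
    simpa using (this.tendsto 0).mono_left nhdsWithin_le_nhds
  -- LHS tendsto : fresnelAux (c ε) → fresnelAux (aI)
  have hL : Tendsto (fun ε : ℝ => fresnelAux (-(ε:ℂ) + (a:ℂ)*Complex.I)) l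
      (nhds (fresnelAux ((a:ℂ)*Complex.I))) := by
    unfold fresnelAux
    apply Tendsto.add
    apply Tendsto.sub
    · -- interval integral piece
      have heq : ∀ c' : ℂ, (∫ y in (0:ℝ)..1, Complex.exp (c' * (y:ℂ)^2))
          = ∫ y in Set.Ioc (0:ℝ) 1, Complex.exp (c' * (y:ℂ)^2) := fun c' =>
        intervalIntegral.integral_of_le zero_le_one
      simp only [heq]
      apply MeasureTheory.tendsto_integral_filter_of_dominated_convergence (fun _ : ℝ => (1:ℝ))
      · filter_upwards with ε
        exact ((fre_cont_exp _).aestronglyMeasurable).restrict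
      · filter_upwards [self_mem_nhdsWithin] with ε (hε : 0 < ε)
        filter_upwards [ae_restrict_mem measurableSet_Ioc] with y hy
        rw [Complex.norm_exp]
        apply Real.exp_le_one_iff.mpr
        have : ((-(ε:ℂ) + (a:ℂ)*Complex.I) * (y:ℂ)^2).re = -ε * y^2 := by
          simp [add_mul, Complex.mul_re, ← Complex.ofReal_pow]
        rw [this]
        have := sq_nonneg y
        nlinarith
      · exact integrableOn_const measure_Ioc_lt_top.ne
      · filter_upwards [ae_restrict_mem measurableSet_Ioc] with y _
        have : Continuous (fun ε : ℝ => Complex.exp ((-(ε:ℂ) + (a:ℂ)*Complex.I) * (y:ℂ)^2)) := by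
          fun_prop
        simpa using (this.tendsto 0).mono_left nhdsWithin_le_nhds
    · -- boundary piece
      have hne : ((2:ℂ) * ((a:ℂ)*Complex.I)) ≠ 0 := by
        simp [Complex.I_ne_zero, ne_of_gt ha]
      exact (hcont_c.cexp.div ((tendsto_const_nhds).mul hcont_c) hne)
    · -- tail piece
      apply MeasureTheory.tendsto_integral_filter_of_dominated_convergence (fun y : ℝ => (2*a)⁻¹ * y^(-2:ℝ))
      · filter_upwards [self_mem_nhdsWithin] with ε (hε : 0 < ε)
        apply ContinuousOn.aestronglyMeasurable _ measurableSet_Ioi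
        apply ContinuousOn.div (fre_cont_exp _).continuousOn (by fun_prop)
        intro y hy
        have hy0 : (y:ℝ) ≠ 0 := by simp only [Set.mem_Ioi] at hy; linarith
        simp [fre_neg_eps_ne a ε ha, Complex.ofReal_ne_zero.mpr hy0]
      · filter_upwards [self_mem_nhdsWithin] with ε (hε : 0 < ε)
        filter_upwards [ae_restrict_mem measurableSet_Ioi] with y hy
        simp only [Set.mem_Ioi] at hy
        have hy0 : (0:ℝ) < y := by linarith
        set c' : ℂ := -(ε:ℂ) + (a:ℂ)*Complex.I with hc'
        have hcne : c' ≠ 0 := fre_neg_eps_ne a ε ha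
        rw [norm_div]
        have hnum : ‖Complex.exp (c'*(y:ℂ)^2)‖ ≤ 1 := by
          rw [Complex.norm_exp]
          apply Real.exp_le_one_iff.mpr
          have : (c'*(y:ℂ)^2).re = -ε * y^2 := by
            simp [hc', add_mul, Complex.mul_re, ← Complex.ofReal_pow]
          rw [this]
          have := sq_nonneg y
          nlinarith
        have hden : ‖(2*c'*(y:ℂ)^2 : ℂ)‖ = 2 * ‖c'‖ * y^2 := by
          rw [norm_mul, norm_mul, norm_pow, Complex.norm_two,
            Complex.norm_real, Real.norm_eq_abs, _root_.sq_abs]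
        rw [hden]
        have hpos : (0:ℝ) < 2 * ‖c'‖ * y^2 :=
          mul_pos (mul_pos two_pos (norm_pos_iff.mpr hcne)) (pow_pos hy0 2)
        rw [div_le_iff₀ hpos]
        have h2 : (2*a)⁻¹ * y^(-2:ℝ) * (2 * ‖c'‖ * y^2) = ‖c'‖ / a := by
          rw [Real.rpow_neg hy0.le, Real.rpow_two]
          field_simp
        rw [h2]
        calc ‖Complex.exp (c'*(y:ℂ)^2)‖ ≤ 1 := hnum
          _ ≤ ‖c'‖ / a := (one_le_div ha).mpr (fre_abs_ge a ε ha)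
      · exact (integrableOn_Ioi_rpow_of_lt (by norm_num) one_pos).const_mul _
      · filter_upwards [ae_restrict_mem measurableSet_Ioi] with y hy
        simp only [Set.mem_Ioi] at hy
        have hy0 : (y:ℝ) ≠ 0 := by linarith
        have hcont : Continuous (fun ε : ℝ =>
            Complex.exp ((-(ε:ℂ) + (a:ℂ)*Complex.I) * (y:ℂ)^2)) := by fun_prop
        have hcont2 : Continuous (fun ε : ℝ => (2*(-(ε:ℂ) + (a:ℂ)*Complex.I)*(y:ℂ)^2)) := by
          fun_prop
        have hne : (2*((a:ℂ)*Complex.I)*(y:ℂ)^2) ≠ 0 := by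
          simp [Complex.I_ne_zero, ne_of_gt ha, Complex.ofReal_ne_zero.mpr hy0]
        have := Tendsto.div ((hcont.tendsto 0)) ((hcont2.tendsto 0)) (by simpa using hne)
        simpa [Pi.div_def] using this.mono_left nhdsWithin_le_nhds
  -- RHS tendsto
  have hR : Tendsto (fun ε : ℝ => ((π:ℂ) / ((ε:ℂ) - (a:ℂ)*Complex.I)) ^ ((1:ℂ)/2) / 2) l
      (nhds (((π:ℂ) / (-(a:ℂ)*Complex.I)) ^ ((1:ℂ)/2) / 2)) := by
    have hne : (-(a:ℂ)*Complex.I) ≠ 0 := by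
      simp [Complex.I_ne_zero, ne_of_gt ha]
    have hbase : Tendsto (fun ε : ℝ => (π:ℂ) / ((ε:ℂ) - (a:ℂ)*Complex.I)) l
        (nhds ((π:ℂ) / (-(a:ℂ)*Complex.I))) := by
      have hc : Continuous (fun ε : ℝ => ((ε:ℂ) - (a:ℂ)*Complex.I)) := by fun_prop
      have : Tendsto (fun ε : ℝ => ((ε:ℂ) - (a:ℂ)*Complex.I)) l (nhds (-(a:ℂ)*Complex.I)) := by
        have := (hc.tendsto 0).mono_left (nhdsWithin_le_nhds (s := Set.Ioi (0:ℝ)))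
        simpa [neg_mul] using this
      exact tendsto_const_nhds.div this hne
    have hcpow : ContinuousAt (fun z : ℂ => z ^ ((1:ℂ)/2)) ((π:ℂ) / (-(a:ℂ)*Complex.I)) := by
      apply continuousAt_cpow_const
      right
      have : ((π:ℂ) / (-(a:ℂ)*Complex.I)).im = π / a := by
        rw [Complex.div_im]
        simp [Complex.normSq]
        field_simp
      rw [this]
      positivity
    exact ((hcpow.tendsto.comp hbase).div_const 2)
  -- eventual equality
  have heq : ∀ᶠ ε : ℝ in l, fresnelAux (-(ε:ℂ) + (a:ℂ)*Complex.I)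
      = ((π:ℂ) / ((ε:ℂ) - (a:ℂ)*Complex.I)) ^ ((1:ℂ)/2) / 2 := by
    filter_upwards [self_mem_nhdsWithin] with ε (hε : 0 < ε)
    set b : ℂ := (ε:ℂ) - (a:ℂ)*Complex.I with hb
    have hbre : 0 < b.re := by simp [hb, hε]
    have hcb : -b = -(ε:ℂ) + (a:ℂ)*Complex.I := by ring
    have hcne : (-b) ≠ 0 := by rw [hcb]; exact fre_neg_eps_ne a ε ha
    have hcre : (-b).re ≤ 0 := by simp [hb]; linarith
    -- Gaussian integral value
    have hgauss : ∫ y in Set.Ioi (0:ℝ), Complex.exp ((-b) * (y:ℂ)^2)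
        = ((π:ℂ) / b) ^ ((1:ℂ)/2) / 2 := by
      have := integral_gaussian_complex_Ioi hbre
      simpa [neg_mul] using this
    -- integral over Ioi 0 equals fresnelAux (-b)
    have hint : IntegrableOn (fun y : ℝ => Complex.exp ((-b) * (y:ℂ)^2)) (Set.Ioi (0:ℝ)) := by
      have := integrable_cexp_neg_mul_sq hbre
      exact (this.integrableOn).congr_fun (fun y _ => rfl) measurableSet_Ioi
    have h1 : Tendsto (fun R : ℝ => ∫ y in (0:ℝ)..R, Complex.exp ((-b)*(y:ℂ)^2)) atTop
        (nhds (∫ y in Set.Ioi (0:ℝ), Complex.exp ((-b) * (y:ℂ)^2))) :=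
      intervalIntegral_tendsto_integral_Ioi 0 hint tendsto_id
    have h2 := fre_tendsto_truncated (-b) hcne hcre
    have h3 := tendsto_nhds_unique h2 h1
    rw [← hcb, h3, hgauss]
  exact tendsto_nhds_unique (hL.congr' heq) hR

lemma fre_tendsto_symm (a : ℝ) (ha : 0 < a) (c : ℝ) :
    Tendsto (fun R : ℝ => ∫ y in (-R - c)..(R - c), Complex.exp ((a:ℂ)*Complex.I*(y:ℂ)^2)) atTop
      (nhds (((π:ℂ) / (-(a:ℂ)*Complex.I)) ^ ((1:ℂ)/2))) := by
  set cc : ℂ := (a:ℂ)*Complex.I with hcc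
  have hcne : cc ≠ 0 := by simp [hcc, Complex.I_ne_zero, ne_of_gt ha]
  have hcre : cc.re ≤ 0 := by simp [hcc]
  have hbase := fre_tendsto_truncated cc hcne hcre
  have heven : ∀ u : ℝ, (∫ y in (0:ℝ)..(-u), Complex.exp (cc*(y:ℂ)^2))
      = - ∫ y in (0:ℝ)..u, Complex.exp (cc*(y:ℂ)^2) := by
    intro u
    have h1 : (∫ y in (0:ℝ)..u, Complex.exp (cc*((-y:ℝ):ℂ)^2))
        = ∫ y in (-u:ℝ)..(-0:ℝ), Complex.exp (cc*(y:ℂ)^2) :=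
      intervalIntegral.integral_comp_neg (fun y : ℝ => Complex.exp (cc*(y:ℂ)^2))
    have h2 : (∫ y in (0:ℝ)..u, Complex.exp (cc*((-y:ℝ):ℂ)^2))
        = ∫ y in (0:ℝ)..u, Complex.exp (cc*(y:ℂ)^2) := by
      apply intervalIntegral.integral_congr
      intro y _
      push_cast
      ring_nf
    rw [h2, neg_zero] at h1
    rw [h1, intervalIntegral.integral_symm]
  have hplus : Tendsto (fun R : ℝ => ∫ y in (0:ℝ)..(R - c), Complex.exp (cc*(y:ℂ)^2)) atTop
      (nhds (fresnelAux cc)) :=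
    hbase.comp (tendsto_atTop_add_const_right atTop (-c) tendsto_id)
  have hminus : Tendsto (fun R : ℝ => ∫ y in (0:ℝ)..(R + c), Complex.exp (cc*(y:ℂ)^2)) atTop
      (nhds (fresnelAux cc)) :=
    hbase.comp (tendsto_atTop_add_const_right atTop c tendsto_id)
  have hsplit : ∀ R : ℝ, (∫ y in (-R - c)..(R - c), Complex.exp (cc*(y:ℂ)^2))
      = (∫ y in (0:ℝ)..(R - c), Complex.exp (cc*(y:ℂ)^2))
        + ∫ y in (0:ℝ)..(R + c), Complex.exp (cc*(y:ℂ)^2) := by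
    intro R
    rw [show (-R - c : ℝ) = -(R + c) by ring]
    have hadj := intervalIntegral.integral_add_adjacent_intervals
      ((fre_cont_exp cc).intervalIntegrable (μ := volume) (-R - c) 0)
      ((fre_cont_exp cc).intervalIntegrable (μ := volume) 0 (R - c))
    have hsym : (∫ y in (-R - c)..(0:ℝ), Complex.exp (cc*(y:ℂ)^2))
        = - ∫ y in (0:ℝ)..(-R - c), Complex.exp (cc*(y:ℂ)^2) :=
      intervalIntegral.integral_symm 0 (-R - c)
    have hneg : (-R - c : ℝ) = -(R + c) := by ring
    rw [hsym, hneg, heven (R + c)] at hadj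
    linear_combination hadj.symm
  have := (hplus.add hminus)
  rw [show fresnelAux cc + fresnelAux cc
      = ((π:ℂ) / (-(a:ℂ)*Complex.I)) ^ ((1:ℂ)/2) from by
    rw [hcc, fre_fresnelAux_value a ha]; ring] at this
  exact this.congr fun R => (hsplit R).symm

lemma fre_cpow_half (r : ℝ) (hr : 0 < r) :
    ((r:ℂ)*Complex.I) ^ ((1:ℂ)/2)
      = (Real.sqrt r : ℂ) * Complex.exp (((π/4 : ℝ) : ℂ)*Complex.I) := by
  have hne : ((r:ℂ)*Complex.I) ≠ 0 := by
    simp [Complex.I_ne_zero, Complex.ofReal_ne_zero.mpr (ne_of_gt hr)]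
  rw [Complex.cpow_def_of_ne_zero hne, Complex.log_ofReal_mul hr Complex.I_ne_zero,
    Complex.log_I]
  rw [show ((Real.log r : ℂ) + ↑π/2*Complex.I) * ((1:ℂ)/2)
      = ((Real.log r / 2 : ℝ) : ℂ) + ((π/4 : ℝ) : ℂ)*Complex.I by push_cast; ring]
  rw [Complex.exp_add, ← Complex.ofReal_exp]
  congr 2
  rw [← Real.log_sqrt hr.le, Real.exp_log (Real.sqrt_pos.mpr hr)]

lemma fre_cpow_neg_half (r : ℝ) (hr : 0 < r) :
    ((r:ℂ)*Complex.I) ^ (-(1/2 : ℂ))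
      = ((Real.sqrt r : ℂ))⁻¹ * Complex.exp (-((π/4 : ℝ) : ℂ)*Complex.I) := by
  have hne : ((r:ℂ)*Complex.I) ≠ 0 := by
    simp [Complex.I_ne_zero, Complex.ofReal_ne_zero.mpr (ne_of_gt hr)]
  rw [Complex.cpow_def_of_ne_zero hne, Complex.log_ofReal_mul hr Complex.I_ne_zero,
    Complex.log_I]
  rw [show ((Real.log r : ℂ) + ↑π/2*Complex.I) * (-(1/2 : ℂ))
      = ((-(Real.log r / 2) : ℝ) : ℂ) + (-((π/4 : ℝ) : ℂ))*Complex.I by push_cast; ring]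
  rw [Complex.exp_add, ← Complex.ofReal_exp]
  congr 2
  rw [Real.exp_neg, ← Real.log_sqrt hr.le, Real.exp_log (Real.sqrt_pos.mpr hr),
    Complex.ofReal_inv]

lemma fre_pi_div_negI (a : ℝ) (ha : 0 < a) :
    (π:ℂ) / (-(a:ℂ)*Complex.I) = ((π/a : ℝ) : ℂ) * Complex.I := by
  have hne : (-(a:ℂ)*Complex.I) ≠ 0 := by
    simp [Complex.I_ne_zero, ne_of_gt ha]
  rw [div_eq_iff hne]
  push_cast
  have hI2 : Complex.I^2 = -1 := Complex.I_sq
  field_simp [ne_of_gt ha]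
  ring_nf
  simp [Complex.I_sq]

lemma fre_const_combine (s t : ℝ) (hs : 0 < s) (ht : 0 < t) :
    (2*(π:ℂ)*Complex.I*(s:ℂ)) ^ (-(1/2 : ℂ)) * (2*(π:ℂ)*Complex.I*(t:ℂ)) ^ (-(1/2 : ℂ)) *
      ((π:ℂ)/(-((((s+t)/(2*s*t)) : ℝ):ℂ)*Complex.I)) ^ ((1:ℂ)/2)
    = (2*(π:ℂ)*Complex.I*((s+t : ℝ):ℂ)) ^ (-(1/2 : ℂ)) := by
  have hst : (0:ℝ) < s + t := by linarith
  have ha : (0:ℝ) < (s+t)/(2*s*t) := by positivity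
  have h2pis : (0:ℝ) < 2*π*s := by positivity
  have h2pit : (0:ℝ) < 2*π*t := by positivity
  have h2pist : (0:ℝ) < 2*π*(s+t) := by positivity
  have hq : (0:ℝ) < π/((s+t)/(2*s*t)) := by positivity
  have e1 : (2*(π:ℂ)*Complex.I*(s:ℂ)) = (((2*π*s : ℝ)):ℂ) * Complex.I := by push_cast; ring
  have e2 : (2*(π:ℂ)*Complex.I*(t:ℂ)) = (((2*π*t : ℝ)):ℂ) * Complex.I := by push_cast; ring
  have e3 : (2*(π:ℂ)*Complex.I*((s+t : ℝ):ℂ)) = (((2*π*(s+t) : ℝ)):ℂ) * Complex.I := by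
    push_cast; ring
  rw [e1, e2, e3, fre_pi_div_negI _ ha, fre_cpow_neg_half _ h2pis, fre_cpow_neg_half _ h2pit,
    fre_cpow_half _ hq, fre_cpow_neg_half _ h2pist]
  have hexp : Complex.exp (-((π/4 : ℝ) : ℂ)*Complex.I) * Complex.exp (-((π/4 : ℝ) : ℂ)*Complex.I)
      * Complex.exp (((π/4 : ℝ) : ℂ)*Complex.I) = Complex.exp (-((π/4 : ℝ) : ℂ)*Complex.I) := by
    rw [← Complex.exp_add, ← Complex.exp_add]
    congr 1
    ring
  have hreal : (Real.sqrt (2*π*s))⁻¹ * (Real.sqrt (2*π*t))⁻¹ * Real.sqrt (π/((s+t)/(2*s*t)))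
      = (Real.sqrt (2*π*(s+t)))⁻¹ := by
    have hkey : Real.sqrt (π/((s+t)/(2*s*t))) * Real.sqrt (2*π*(s+t))
        = Real.sqrt (2*π*s) * Real.sqrt (2*π*t) := by
      rw [← Real.sqrt_mul hq.le, ← Real.sqrt_mul h2pis.le]
      congr 1
      field_simp
    have hs1 : Real.sqrt (2*π*s) ≠ 0 := ne_of_gt (Real.sqrt_pos.mpr h2pis)
    have hs2 : Real.sqrt (2*π*t) ≠ 0 := ne_of_gt (Real.sqrt_pos.mpr h2pit)
    have hs3 : Real.sqrt (2*π*(s+t)) ≠ 0 := ne_of_gt (Real.sqrt_pos.mpr h2pist)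
    have harg : Real.sqrt (π/((s+t)/(2*s*t)))
        = Real.sqrt (2*π*s) * Real.sqrt (2*π*t) / Real.sqrt (2*π*(s+t)) := by
      rw [eq_div_iff hs3]; exact hkey
    rw [harg]
    field_simp
  calc ((Real.sqrt (2*π*s) : ℂ))⁻¹ * Complex.exp (-((π/4 : ℝ) : ℂ)*Complex.I) *
        (((Real.sqrt (2*π*t) : ℂ))⁻¹ * Complex.exp (-((π/4 : ℝ) : ℂ)*Complex.I)) *
        ((Real.sqrt (π/((s+t)/(2*s*t))) : ℂ) * Complex.exp (((π/4 : ℝ) : ℂ)*Complex.I))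
      = (((Real.sqrt (2*π*s))⁻¹ * (Real.sqrt (2*π*t))⁻¹ * Real.sqrt (π/((s+t)/(2*s*t))) : ℝ) : ℂ)
          * (Complex.exp (-((π/4 : ℝ) : ℂ)*Complex.I) * Complex.exp (-((π/4 : ℝ) : ℂ)*Complex.I)
            * Complex.exp (((π/4 : ℝ) : ℂ)*Complex.I)) := by push_cast; ring
    _ = ((Real.sqrt (2*π*(s+t)) : ℂ))⁻¹ * Complex.exp (-((π/4 : ℝ) : ℂ)*Complex.I) := by
        rw [hreal, hexp]; push_cast; ring

lemma fre_complete_square (u v y ξ a c : ℂ) (ha2 : a*(2*u*v) = u+v) (hc : c*(u+v) = u*ξ)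
    (hu : u ≠ 0) (hv : v ≠ 0) (huv : u + v ≠ 0) :
    Complex.I/2*y^2/u + Complex.I/2*(ξ - y)^2/v
      = a*Complex.I*(y - c)^2 + Complex.I/2*ξ^2/(u+v) := by
  have ha' : a = (u+v)/(2*u*v) := by rw [eq_div_iff (by simp [hu, hv])]; exact ha2
  have hc' : c = u*ξ/(u+v) := by rw [eq_div_iff huv]; exact hc
  subst ha' hc'
  field_simp
  ring

/-- Two-step convolution identity for the free Feynman propagator: for `s, t > 0`,
`∫_ℝ K_s(y) K_t(ξ - y) dy = K_{s+t}(ξ)` as an improper Riemann integral. -/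
theorem freeKernel_convolution (s t : ℝ) (hs : 0 < s) (ht : 0 < t) (ξ : ℝ) :
    Tendsto (fun R : ℝ => ∫ y in (-R)..R, freeKernel s y * freeKernel t (ξ - y)) atTop
      (nhds (freeKernel (s + t) ξ)) := by
  have hst : (0:ℝ) < s + t := by linarith
  set a : ℝ := (s+t)/(2*s*t) with hadef
  have ha : 0 < a := by rw [hadef]; positivity
  set c : ℝ := s*ξ/(s+t) with hcdef
  set C0 : ℂ := (2*(π:ℂ)*Complex.I*(s:ℂ)) ^ (-(1/2 : ℂ)) * (2*(π:ℂ)*Complex.I*(t:ℂ)) ^ (-(1/2 : ℂ))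
    * Complex.exp (Complex.I/2*(ξ:ℂ)^2/((s+t:ℝ):ℂ)) with hC0
  have hsne : (s:ℂ) ≠ 0 := Complex.ofReal_ne_zero.mpr (ne_of_gt hs)
  have htne : (t:ℂ) ≠ 0 := Complex.ofReal_ne_zero.mpr (ne_of_gt ht)
  have hstne : ((s:ℂ) + (t:ℂ)) ≠ 0 := by
    rw [← Complex.ofReal_add]; exact Complex.ofReal_ne_zero.mpr (ne_of_gt hst)
  -- pointwise identity
  have hpt : ∀ y : ℝ, freeKernel s y * freeKernel t (ξ - y)
      = C0 * Complex.exp ((a:ℂ)*Complex.I*((y:ℂ)-(c:ℂ))^2) := by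
    intro y
    unfold freeKernel
    have ha2 : (a:ℂ)*(2*(s:ℂ)*(t:ℂ)) = (s:ℂ)+(t:ℂ) := by
      rw [hadef]; push_cast; field_simp
    have hc2 : (c:ℂ)*((s:ℂ)+(t:ℂ)) = (s:ℂ)*(ξ:ℂ) := by
      rw [hcdef]; push_cast; field_simp
    have hexp : Complex.I/2*(y:ℂ)^2/(s:ℂ) + Complex.I/2*((ξ - y : ℝ):ℂ)^2/(t:ℂ)
        = (a:ℂ)*Complex.I*((y:ℂ)-(c:ℂ))^2 + Complex.I/2*(ξ:ℂ)^2/((s+t:ℝ):ℂ) := by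
      push_cast
      exact fre_complete_square (s:ℂ) (t:ℂ) (y:ℂ) (ξ:ℂ) (a:ℂ) (c:ℂ) ha2 hc2 hsne htne hstne
    calc (2*(π:ℂ)*Complex.I*(s:ℂ)) ^ (-(1/2 : ℂ)) * Complex.exp (Complex.I/2*(y:ℂ)^2/(s:ℂ))
          * ((2*(π:ℂ)*Complex.I*(t:ℂ)) ^ (-(1/2 : ℂ))
            * Complex.exp (Complex.I/2*((ξ - y : ℝ):ℂ)^2/(t:ℂ)))
        = (2*(π:ℂ)*Complex.I*(s:ℂ)) ^ (-(1/2 : ℂ)) * (2*(π:ℂ)*Complex.I*(t:ℂ)) ^ (-(1/2 : ℂ))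
          * Complex.exp (Complex.I/2*(y:ℂ)^2/(s:ℂ) + Complex.I/2*((ξ - y : ℝ):ℂ)^2/(t:ℂ)) := by
          rw [Complex.exp_add]; ring
      _ = C0 * Complex.exp ((a:ℂ)*Complex.I*((y:ℂ)-(c:ℂ))^2) := by
          rw [hexp, Complex.exp_add, hC0]; ring
  -- rewrite the truncated integrals
  have hint : ∀ R : ℝ, (∫ y in (-R)..R, freeKernel s y * freeKernel t (ξ - y))
      = C0 * ∫ y in (-R - c)..(R - c), Complex.exp ((a:ℂ)*Complex.I*(y:ℂ)^2) := by
    intro R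
    rw [intervalIntegral.integral_congr (g := fun y : ℝ =>
      C0 * Complex.exp ((a:ℂ)*Complex.I*((y:ℂ)-(c:ℂ))^2)) (fun y _ => hpt y)]
    rw [intervalIntegral.integral_const_mul]
    congr 1
    have hcomp := intervalIntegral.integral_comp_sub_right
      (a := -R) (b := R) (fun y : ℝ => Complex.exp ((a:ℂ)*Complex.I*(y:ℂ)^2)) c
    rw [← hcomp]
    apply intervalIntegral.integral_congr
    intro y _
    push_cast
    ring_nf
  have hT := (fre_tendsto_symm a ha c).const_mul C0
  rw [show C0 * (((π:ℂ) / (-(a:ℂ)*Complex.I)) ^ ((1:ℂ)/2)) = freeKernel (s+t) ξ from ?_] at hT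
  · exact hT.congr fun R => (hint R).symm
  · unfold freeKernel
    rw [hC0, hadef, ← fre_const_combine s t hs ht]
    ring
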